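/- Let Δ be odd, Δ > 1, with 2-adic structure as follows: suppose we have a partition P of GR(4^Δ)\{0} into triples {a,2a,3a} and sixtuples {±a, ±b, ±(a+b)}. Form the Z_4-matrix H whose columns are, for each sixtuple, a chosen pair (a,b), and for each triple, the element a (viewed as vectors in Z_4^Δ). Then the code C = {c : Hc^T = 0} is a 1-perfect code in the Doob graph D(m, n), where m is the number of sixtuples and n the number of triples. -/

import Mathlib

/-- Vertices of the Doob graph `D(m,n)`: `m` Shrikhande coordinates (pairs over `ZMod 4`)
and `n` `K₄` coordinates (single `ZMod 4` values); identified with `Z₄^{2m+n}`. -/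
abbrev DoobVertex (m n : ℕ) := (Fin m → ZMod 4 × ZMod 4) × (Fin n → ZMod 4)

/-- The connecting set of the Shrikhande graph, a Cayley graph on `Z₄²`. -/
def shrikConn : Set (ZMod 4 × ZMod 4) :=
  {(0, 1), (0, 3), (1, 0), (3, 0), (1, 1), (3, 3)}

/-- The connecting set of the Doob graph `D(m,n)` as a Cayley graph on `Z₄^{2m+n}`:
nonzero in exactly one coordinate, where the value lies in the connecting set of the
Shrikhande graph (for the first `m` coordinates) or is an arbitrary nonzero element
of `Z₄` (for the last `n` coordinates). -/
def doobConn (m n : ℕ) : Set (DoobVertex m n) :=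
  {v | (∃ i, v.1 i ∈ shrikConn ∧ (∀ i', i' ≠ i → v.1 i' = 0) ∧ v.2 = 0) ∨
       (∃ j, v.2 j ≠ 0 ∧ (∀ j', j' ≠ j → v.2 j' = 0) ∧ v.1 = 0)}

/-- The Doob graph `D(m,n)`: the Cartesian product of `m` Shrikhande graphs and
`n` copies of `K₄`, realized as a Cayley graph on `Z₄^{2m+n}`. -/
def doobGraph (m n : ℕ) : SimpleGraph (DoobVertex m n) where
  Adj u v := u ≠ v ∧ (u - v ∈ doobConn m n ∨ v - u ∈ doobConn m n)
  symm := ⟨fun u v h => ⟨h.1.symm, h.2.symm⟩⟩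
  loopless := ⟨fun u h => h.1 rfl⟩

/-- A 1-perfect code: every vertex is at distance at most 1 from exactly one codeword. -/
def IsPerfect1Code {V : Type*} (G : SimpleGraph V) (C : Set V) : Prop :=
  ∀ v : V, ∃! c : V, c ∈ C ∧ (v = c ∨ G.Adj v c)

section
variable {α : Type*} [AddCommGroup α] [Module (ZMod 4) α]

lemma three_smul (x : α) : (3 : ZMod 4) • x = -x := by
  have h : (3 : ZMod 4) = -1 := by decide
  rw [h, neg_smul, one_smul]

lemma two_smul' (x : α) : (2 : ZMod 4) • x = 2 • x := by
  simpa using Nat.cast_smul_eq_nsmul (ZMod 4) 2 x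

lemma three_smul' (x : α) : (3 : ZMod 4) • x = 3 • x := by
  simpa using Nat.cast_smul_eq_nsmul (ZMod 4) 3 x

lemma shrik_ncard' : shrikConn.ncard = 6 := by
  rw [show shrikConn = ↑({(0, 1), (0, 3), (1, 0), (3, 0), (1, 1), (3, 3)} :
      Finset (ZMod 4 × ZMod 4)) by ext p; simp [shrikConn], Set.ncard_coe_finset]
  decide

lemma tri_ncard' : ({1, 2, 3} : Set (ZMod 4)).ncard = 3 := by
  rw [show ({1,2,3} : Set (ZMod 4)) = ↑({1,2,3} : Finset (ZMod 4)) by ext p; simp,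
    Set.ncard_coe_finset]
  decide

lemma shrik_image (a b : α) :
    (fun p : ZMod 4 × ZMod 4 => p.1 • a + p.2 • b) '' shrikConn
      = ({a, b, -a-b, -a, -b, a+b} : Set α) := by
  simp only [shrikConn, Set.image_insert_eq, Set.image_singleton, three_smul, zero_smul,
    one_smul, zero_add, add_zero, ← sub_eq_add_neg, zero_sub]
  ext x
  simp only [Set.mem_insert_iff, Set.mem_singleton_iff]
  tauto

lemma tri_image (x : α) :
    (fun c : ZMod 4 => c • x) '' ({1, 2, 3} : Set (ZMod 4)) = ({x, 2 • x, 3 • x} : Set α) := by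
  simp only [Set.image_insert_eq, Set.image_singleton, one_smul, two_smul', three_smul']

lemma zero_not_mem_six {a b : α}
    (hinj : Set.InjOn (fun p : ZMod 4 × ZMod 4 => p.1 • a + p.2 • b) shrikConn) :
    (0:α) ∉ ({a, b, -a-b, -a, -b, a+b} : Set α) := by
  have m1 : ((0:ZMod 4), (1:ZMod 4)) ∈ shrikConn := Set.mem_insert _ _
  have m2 : ((0:ZMod 4), (3:ZMod 4)) ∈ shrikConn :=
    Set.mem_insert_of_mem _ (Set.mem_insert _ _)
  have m3 : ((1:ZMod 4), (0:ZMod 4)) ∈ shrikConn :=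
    Set.mem_insert_of_mem _ (Set.mem_insert_of_mem _ (Set.mem_insert _ _))
  have m4 : ((3:ZMod 4), (0:ZMod 4)) ∈ shrikConn :=
    Set.mem_insert_of_mem _ (Set.mem_insert_of_mem _ (Set.mem_insert_of_mem _
      (Set.mem_insert _ _)))
  have m5 : ((1:ZMod 4), (1:ZMod 4)) ∈ shrikConn :=
    Set.mem_insert_of_mem _ (Set.mem_insert_of_mem _ (Set.mem_insert_of_mem _
      (Set.mem_insert_of_mem _ (Set.mem_insert _ _))))
  have m6 : ((3:ZMod 4), (3:ZMod 4)) ∈ shrikConn :=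
    Set.mem_insert_of_mem _ (Set.mem_insert_of_mem _ (Set.mem_insert_of_mem _
      (Set.mem_insert_of_mem _ (Set.mem_insert_of_mem _ rfl))))
  have ha : a ≠ 0 := by
    intro h
    have := hinj m3 m4 (by simp only [three_smul, one_smul, zero_smul, add_zero, h, neg_zero])
    exact absurd this (by decide)
  have hb : b ≠ 0 := by
    intro h
    have := hinj m1 m2 (by simp only [three_smul, one_smul, zero_smul, zero_add, h, neg_zero])
    exact absurd this (by decide)
  have hab : a + b ≠ 0 := by
    intro h
    have := hinj m5 m6 (by
      simp only [three_smul, one_smul]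
      rw [show -a + -b = -(a+b) by abel, h, neg_zero])
    exact absurd this (by decide)
  intro h0
  simp only [Set.mem_insert_iff, Set.mem_singleton_iff] at h0
  rcases h0 with h|h|h|h|h|h
  · exact ha h.symm
  · exact hb h.symm
  · exact hab (by rw [show a + b = -(-a-b) by abel, ← h, neg_zero])
  · exact ha (neg_eq_zero.mp h.symm)
  · exact hb (neg_eq_zero.mp h.symm)
  · exact hab h.symm

lemma zero_not_mem_tri {x : α}
    (hinj : Set.InjOn (fun c : ZMod 4 => c • x) ({1,2,3} : Set (ZMod 4))) :
    (0:α) ∉ ({x, 2 • x, 3 • x} : Set α) := by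
  have m1 : (1:ZMod 4) ∈ ({1,2,3} : Set (ZMod 4)) := Set.mem_insert _ _
  have m2 : (2:ZMod 4) ∈ ({1,2,3} : Set (ZMod 4)) :=
    Set.mem_insert_of_mem _ (Set.mem_insert _ _)
  have m3 : (3:ZMod 4) ∈ ({1,2,3} : Set (ZMod 4)) :=
    Set.mem_insert_of_mem _ (Set.mem_insert_of_mem _ rfl)
  have hx : x ≠ 0 := by
    intro h
    have := hinj m1 m2 (by simp only [h, smul_zero])
    exact absurd this (by decide)
  intro h0
  simp only [Set.mem_insert_iff, Set.mem_singleton_iff] at h0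
  rcases h0 with h|h|h
  · exact hx h.symm
  · -- 0 = 2 • x
    have h2 : (2:ZMod 4) • x = 0 := by rw [two_smul']; exact h.symm
    have : (1:ZMod 4) • x = (3:ZMod 4) • x := by
      rw [show (3:ZMod 4) = 1 + 2 by decide, add_smul, h2, add_zero]
    exact absurd (hinj m1 m3 this) (by decide)
  · -- 0 = 3 • x
    have h3 : (3:ZMod 4) • x = 0 := by rw [three_smul']; exact h.symm
    exact hx (by
      have : x = (3:ZMod 4) • ((3:ZMod 4) • x) := by
        rw [smul_smul, show (3:ZMod 4) * 3 = 1 by decide, one_smul]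
      rw [this, h3, smul_zero])

end

section
variable {Δ m n : ℕ} (A B : Fin m → (Fin Δ → ZMod 4)) (t : Fin n → (Fin Δ → ZMod 4))

def synMap (v : DoobVertex m n) : Fin Δ → ZMod 4 :=
  (∑ i : Fin m, ((v.1 i).1 • A i + (v.1 i).2 • B i)) + (∑ j : Fin n, v.2 j • t j)

lemma synMap_sub (u w : DoobVertex m n) :
    synMap A B t (u - w) = synMap A B t u - synMap A B t w := by
  simp only [synMap, Prod.fst_sub, Prod.snd_sub, Pi.sub_apply]
  rw [show (∑ i : Fin m, (((u.1 i).1 - (w.1 i).1) • A i + ((u.1 i).2 - (w.1 i).2) • B i))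
        = ∑ i : Fin m, (((u.1 i).1 • A i + (u.1 i).2 • B i)
            - ((w.1 i).1 • A i + (w.1 i).2 • B i)) from
      Finset.sum_congr rfl (fun i _ => by rw [sub_smul, sub_smul]; abel),
    show (∑ j : Fin n, ((u.2 j - w.2 j) • t j)) = ∑ j : Fin n, (u.2 j • t j - w.2 j • t j) from
      Finset.sum_congr rfl (fun j _ => by rw [sub_smul]),
    Finset.sum_sub_distrib, Finset.sum_sub_distrib]
  abel

lemma synMap_zero : synMap A B t 0 = 0 := by
  simp [synMap]

lemma synMap_single_shrik (i : Fin m) (p : ZMod 4 × ZMod 4) :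
    synMap A B t (Pi.single i p, 0) = p.1 • A i + p.2 • B i := by
  simp only [synMap]
  rw [Finset.sum_eq_single_of_mem i (Finset.mem_univ i)]
  · simp [Pi.single_eq_same]
  · intro i' _ hne
    simp [Pi.single_eq_of_ne hne]

lemma synMap_single_k4 (j : Fin n) (c : ZMod 4) :
    synMap A B t (0, Pi.single j c) = c • t j := by
  simp only [synMap]
  rw [Finset.sum_eq_single_of_mem j (Finset.mem_univ j)]
  · simp [Pi.single_eq_same]
  · intro j' _ hne
    simp [Pi.single_eq_of_ne hne]

end


section
variable {m n : ℕ}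

lemma conn_cases {e : DoobVertex m n} (he : e ∈ doobConn m n) :
    (∃ i : Fin m, ∃ p ∈ shrikConn, e = (Pi.single i p, (0 : Fin n → ZMod 4))) ∨
    (∃ j : Fin n, ∃ c : ZMod 4, c ≠ 0 ∧
      e = ((0 : Fin m → ZMod 4 × ZMod 4), Pi.single j c)) := by
  rcases he with ⟨i, hp, hz, h2⟩ | ⟨j, hc, hz, h1⟩
  · refine .inl ⟨i, e.1 i, hp, ?_⟩
    have h1 : e.1 = Pi.single i (e.1 i) := by
      funext i'
      by_cases h : i' = i
      · subst h; rw [Pi.single_eq_same]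
      · rw [Pi.single_eq_of_ne h]; exact hz i' h
    calc e = (e.1, e.2) := rfl
    _ = (Pi.single i (e.1 i), 0) := by rw [← h1, h2]
  · refine .inr ⟨j, e.2 j, hc, ?_⟩
    have h2 : e.2 = Pi.single j (e.2 j) := by
      funext j'
      by_cases h : j' = j
      · subst h; rw [Pi.single_eq_same]
      · rw [Pi.single_eq_of_ne h]; exact hz j' h
    calc e = (e.1, e.2) := rfl
    _ = (0, Pi.single j (e.2 j)) := by rw [← h2, h1]

lemma conn_neg {e : DoobVertex m n} (he : e ∈ doobConn m n) : -e ∈ doobConn m n := by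
  rcases he with ⟨i, hp, hz, h2⟩ | ⟨j, hc, hz, h1⟩
  · refine .inl ⟨i, ?_, fun i' h => ?_, ?_⟩
    · show -(e.1 i) ∈ shrikConn
      revert hp
      simp only [shrikConn, Set.mem_insert_iff, Set.mem_singleton_iff]
      rintro (h|h|h|h|h|h) <;> rw [h] <;> decide
    · show -(e.1 i') = 0; rw [hz i' h, neg_zero]
    · show -(e.2) = 0; rw [h2, neg_zero]
  · refine .inr ⟨j, ?_, fun j' h => ?_, ?_⟩
    · show -(e.2 j) ≠ 0; exact neg_ne_zero.mpr hc
    · show -(e.2 j') = 0; rw [hz j' h, neg_zero]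
    · show -(e.1) = 0; rw [h1, neg_zero]

end

theorem perfect_code_from_partition (Δ m n : ℕ) (hΔodd : Odd Δ) (hΔ : 1 < Δ)
    (A B : Fin m → (Fin Δ → ZMod 4)) (t : Fin n → (Fin Δ → ZMod 4))
    -- the sixtuples and triples built from the columns of the check matrix
    (parts : Fin m ⊕ Fin n → Set (Fin Δ → ZMod 4))
    (hparts : parts = Sum.elim
      (fun i => ({A i, B i, -A i - B i, -A i, -B i, A i + B i} : Set (Fin Δ → ZMod 4)))
      (fun j => ({t j, 2 • t j, 3 • t j} : Set (Fin Δ → ZMod 4))))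
    -- they have full size
    (hsix : ∀ i : Fin m, (parts (Sum.inl i)).ncard = 6)
    (htri : ∀ j : Fin n, (parts (Sum.inr j)).ncard = 3)
    -- and they partition `GR(4^Δ) \ {0} = Z₄^Δ \ {0}`
    (hpartition : ∀ x : Fin Δ → ZMod 4, x ≠ 0 → ∃! k : Fin m ⊕ Fin n, x ∈ parts k) :
    IsPerfect1Code (doobGraph m n)
      {v : DoobVertex m n |
        (∑ i : Fin m, ((v.1 i).1 • A i + (v.1 i).2 • B i)) +
        (∑ j : Fin n, v.2 j • t j) = 0} := by
  subst hparts
  have mem123 : ∀ c : ZMod 4, c ≠ 0 → c ∈ ({1, 2, 3} : Set (ZMod 4)) := by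
    intro c hc
    simp only [Set.mem_insert_iff, Set.mem_singleton_iff]
    revert hc
    revert c
    decide
  have hsix' : ∀ i : Fin m,
      Set.InjOn (fun p : ZMod 4 × ZMod 4 => p.1 • A i + p.2 • B i) shrikConn := by
    intro i
    apply Set.injOn_of_ncard_image_eq ?_ (Set.toFinite _)
    rw [shrik_image, shrik_ncard']
    simpa using hsix i
  have htri' : ∀ j : Fin n,
      Set.InjOn (fun c : ZMod 4 => c • t j) ({1, 2, 3} : Set (ZMod 4)) := by
    intro j
    apply Set.injOn_of_ncard_image_eq ?_ (Set.toFinite _)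
    rw [tri_image, tri_ncard']
    simpa using htri j
  have hz6 : ∀ i : Fin m, (0 : Fin Δ → ZMod 4) ∉
      ({A i, B i, -A i - B i, -A i, -B i, A i + B i} : Set (Fin Δ → ZMod 4)) :=
    fun i => zero_not_mem_six (hsix' i)
  have hz3 : ∀ j : Fin n, (0 : Fin Δ → ZMod 4) ∉
      ({t j, 2 • t j, 3 • t j} : Set (Fin Δ → ZMod 4)) :=
    fun j => zero_not_mem_tri (htri' j)
  have hne : ∀ e ∈ doobConn m n, synMap A B t e ≠ 0 := by
    intro e he
    rcases conn_cases he with ⟨i, p, hp, rfl⟩ | ⟨j, c, hc, rfl⟩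
    · rw [synMap_single_shrik]
      intro h0
      exact hz6 i (h0 ▸ (by rw [← shrik_image]; exact Set.mem_image_of_mem _ hp))
    · rw [synMap_single_k4]
      intro h0
      exact hz3 j (h0 ▸ (by rw [← tri_image]; exact Set.mem_image_of_mem _ (mem123 c hc)))
  have hσinjOn : ∀ e ∈ doobConn m n, ∀ e' ∈ doobConn m n,
      synMap A B t e = synMap A B t e' → e = e' := by
    intro e he e' he'
    have hne_e := hne e he
    rcases conn_cases he with ⟨i, p, hp, rfl⟩ | ⟨j, c, hc, rfl⟩
    · rw [synMap_single_shrik] at hne_e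
      rcases conn_cases he' with ⟨i', p', hp', rfl⟩ | ⟨j', c', hc', rfl⟩
      · intro h
        rw [synMap_single_shrik, synMap_single_shrik] at h
        have hx1 : (p.1 • A i + p.2 • B i) ∈ Sum.elim
            (fun i => ({A i, B i, -A i - B i, -A i, -B i, A i + B i} :
              Set (Fin Δ → ZMod 4)))
            (fun j => ({t j, 2 • t j, 3 • t j} : Set (Fin Δ → ZMod 4))) (Sum.inl i) := by
          simp only [Sum.elim_inl]
          rw [← shrik_image]
          exact Set.mem_image_of_mem _ hp
        have hx2 : (p.1 • A i + p.2 • B i) ∈ Sum.elim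
            (fun i => ({A i, B i, -A i - B i, -A i, -B i, A i + B i} :
              Set (Fin Δ → ZMod 4)))
            (fun j => ({t j, 2 • t j, 3 • t j} : Set (Fin Δ → ZMod 4))) (Sum.inl i') := by
          simp only [Sum.elim_inl]
          rw [h, ← shrik_image]
          exact Set.mem_image_of_mem _ hp'
        obtain ⟨k, hk, hu⟩ := hpartition _ hne_e
        have hii : (Sum.inl i : Fin m ⊕ Fin n) = Sum.inl i' :=
          (hu _ hx1).trans (hu _ hx2).symm
        obtain rfl : i = i' := by simpa using hii
        have : p = p' := hsix' i hp hp' h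
        rw [this]
      · intro h
        rw [synMap_single_shrik, synMap_single_k4] at h
        have hx1 : (p.1 • A i + p.2 • B i) ∈ Sum.elim
            (fun i => ({A i, B i, -A i - B i, -A i, -B i, A i + B i} :
              Set (Fin Δ → ZMod 4)))
            (fun j => ({t j, 2 • t j, 3 • t j} : Set (Fin Δ → ZMod 4))) (Sum.inl i) := by
          simp only [Sum.elim_inl]
          rw [← shrik_image]
          exact Set.mem_image_of_mem _ hp
        have hx2 : (p.1 • A i + p.2 • B i) ∈ Sum.elim
            (fun i => ({A i, B i, -A i - B i, -A i, -B i, A i + B i} :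
              Set (Fin Δ → ZMod 4)))
            (fun j => ({t j, 2 • t j, 3 • t j} : Set (Fin Δ → ZMod 4))) (Sum.inr j') := by
          simp only [Sum.elim_inr]
          rw [h, ← tri_image]
          exact Set.mem_image_of_mem _ (mem123 c' hc')
        obtain ⟨k, hk, hu⟩ := hpartition _ hne_e
        have hii : (Sum.inl i : Fin m ⊕ Fin n) = Sum.inr j' :=
          (hu _ hx1).trans (hu _ hx2).symm
        simp at hii
    · rw [synMap_single_k4] at hne_e
      rcases conn_cases he' with ⟨i', p', hp', rfl⟩ | ⟨j', c', hc', rfl⟩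
      · intro h
        rw [synMap_single_k4, synMap_single_shrik] at h
        have hx1 : (c • t j) ∈ Sum.elim
            (fun i => ({A i, B i, -A i - B i, -A i, -B i, A i + B i} :
              Set (Fin Δ → ZMod 4)))
            (fun j => ({t j, 2 • t j, 3 • t j} : Set (Fin Δ → ZMod 4))) (Sum.inr j) := by
          simp only [Sum.elim_inr]
          rw [← tri_image]
          exact Set.mem_image_of_mem _ (mem123 c hc)
        have hx2 : (c • t j) ∈ Sum.elim
            (fun i => ({A i, B i, -A i - B i, -A i, -B i, A i + B i} :
              Set (Fin Δ → ZMod 4)))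
            (fun j => ({t j, 2 • t j, 3 • t j} : Set (Fin Δ → ZMod 4))) (Sum.inl i') := by
          simp only [Sum.elim_inl]
          rw [h, ← shrik_image]
          exact Set.mem_image_of_mem _ hp'
        obtain ⟨k, hk, hu⟩ := hpartition _ hne_e
        have hii : (Sum.inr j : Fin m ⊕ Fin n) = Sum.inl i' :=
          (hu _ hx1).trans (hu _ hx2).symm
        simp at hii
      · intro h
        rw [synMap_single_k4, synMap_single_k4] at h
        have hx1 : (c • t j) ∈ Sum.elim
            (fun i => ({A i, B i, -A i - B i, -A i, -B i, A i + B i} :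
              Set (Fin Δ → ZMod 4)))
            (fun j => ({t j, 2 • t j, 3 • t j} : Set (Fin Δ → ZMod 4))) (Sum.inr j) := by
          simp only [Sum.elim_inr]
          rw [← tri_image]
          exact Set.mem_image_of_mem _ (mem123 c hc)
        have hx2 : (c • t j) ∈ Sum.elim
            (fun i => ({A i, B i, -A i - B i, -A i, -B i, A i + B i} :
              Set (Fin Δ → ZMod 4)))
            (fun j => ({t j, 2 • t j, 3 • t j} : Set (Fin Δ → ZMod 4))) (Sum.inr j') := by
          simp only [Sum.elim_inr]
          rw [h, ← tri_image]
          exact Set.mem_image_of_mem _ (mem123 c' hc')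
        obtain ⟨k, hk, hu⟩ := hpartition _ hne_e
        have hjj : (Sum.inr j : Fin m ⊕ Fin n) = Sum.inr j' :=
          (hu _ hx1).trans (hu _ hx2).symm
        obtain rfl : j = j' := by simpa using hjj
        have : c = c' := htri' j (mem123 c hc) (mem123 c' hc') h
        rw [this]
  have hσsurj : ∀ x : Fin Δ → ZMod 4, x ≠ 0 → ∃ e ∈ doobConn m n, synMap A B t e = x := by
    intro x hx
    obtain ⟨k, hk, -⟩ := hpartition x hx
    rcases k with i | j
    · simp only [Sum.elim_inl] at hk
      rw [← shrik_image] at hk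
      obtain ⟨p, hp, hfp⟩ := hk
      refine ⟨(Pi.single i p, 0), Or.inl ⟨i, ?_, ?_, rfl⟩, ?_⟩
      · show (Pi.single i p : Fin m → ZMod 4 × ZMod 4) i ∈ shrikConn
        rw [Pi.single_eq_same]; exact hp
      · intro i' h
        show (Pi.single i p : Fin m → ZMod 4 × ZMod 4) i' = 0
        exact Pi.single_eq_of_ne h _
      · rw [synMap_single_shrik]; exact hfp
    · simp only [Sum.elim_inr] at hk
      rw [← tri_image] at hk
      obtain ⟨c, hcmem, hfc⟩ := hk
      have hc0 : c ≠ 0 := by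
        have : c = 1 ∨ c = 2 ∨ c = 3 := by simpa using hcmem
        rcases this with rfl | rfl | rfl <;> decide
      refine ⟨(0, Pi.single j c), Or.inr ⟨j, ?_, ?_, rfl⟩, ?_⟩
      · show (Pi.single j c : Fin n → ZMod 4) j ≠ 0
        rw [Pi.single_eq_same]; exact hc0
      · intro j' h
        show (Pi.single j c : Fin n → ZMod 4) j' = 0
        exact Pi.single_eq_of_ne h _
      · rw [synMap_single_k4]; exact hfc
  intro v
  by_cases hv : synMap A B t v = 0
  · refine ⟨v, ⟨hv, Or.inl rfl⟩, ?_⟩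
    rintro c ⟨hc, hvc⟩
    have hc0 : synMap A B t c = 0 := hc
    rcases hvc with rfl | hadj
    · rfl
    · exfalso
      have hadj' : v ≠ c ∧ (v - c ∈ doobConn m n ∨ c - v ∈ doobConn m n) := hadj
      rcases hadj'.2 with h | h
      · exact hne _ h (by rw [synMap_sub, hv, hc0, sub_zero])
      · exact hne _ h (by rw [synMap_sub, hv, hc0, sub_zero])
  · obtain ⟨e, he, hee⟩ := hσsurj _ hv
    have hve : synMap A B t (v - e) = 0 := by rw [synMap_sub, hee, sub_self]
    refine ⟨v - e, ⟨hve, Or.inr ?_⟩, ?_⟩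
    · show v ≠ v - e ∧ (v - (v - e) ∈ doobConn m n ∨ (v - e) - v ∈ doobConn m n)
      constructor
      · intro h
        have he0 : e = 0 := sub_eq_self.mp h.symm
        rw [he0, synMap_zero] at hee
        exact hv hee.symm
      · left
        rw [show v - (v - e) = e by abel]
        exact he
    · rintro c ⟨hc, hvc⟩
      have hc0 : synMap A B t c = 0 := hc
      rcases hvc with rfl | hadj
      · exact absurd hc0 hv
      · have hadj' : v ≠ c ∧ (v - c ∈ doobConn m n ∨ c - v ∈ doobConn m n) := hadj
        have hvc' : v - c ∈ doobConn m n := by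
          rcases hadj'.2 with h | h
          · exact h
          · have := conn_neg h
            rwa [neg_sub] at this
        have : v - c = e := hσinjOn _ hvc' _ he (by rw [synMap_sub, hc0, sub_zero, hee])
        rw [← this]
        abel
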